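/- Fix ε > 0 and m ≥ 0. For all (x,t) in εℤ² with t > 0: a1(x, t+ε, m, ε) = (1/√(1+m²ε²))·(a1(x+ε, t, m, ε) + mε·a2(x+ε, t, m, ε)) and a2(x, t+ε, m, ε) = (1/√(1+m²ε²))·(a2(x−ε, t, m, ε) − mε·a1(x−ε, t, m, ε)). -/

import Mathlib

open scoped BigOperators

noncomputable section

/-- Endpoint `x`-coordinate of a checker path of `n` steps encoded by step directions:
`true` = step `(1,1)`, `false` = step `(-1,1)`. -/
def endpt {n : ℕ} (d : Fin n → Bool) : ℤ :=
  ∑ i, (if d i then (1 : ℤ) else -1)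

/-- The number of turns of a checker path encoded by step directions. -/
def turns {n : ℕ} (d : Fin n → Bool) : ℕ :=
  ((Finset.range n).filter fun i =>
    ∃ h : i + 1 < n, d ⟨i, Nat.lt_of_succ_lt h⟩ ≠ d ⟨i + 1, h⟩).card

/-- Checker paths from `(0,0)` to `(x,n)` with the first step to `(1,1)`,
encoded by their step directions. -/
def pathsTo (x : ℤ) (n : ℕ) : Finset (Fin n → Bool) :=
  Finset.univ.filter fun d => (∃ h : 0 < n, d ⟨0, h⟩ = true) ∧ endpt d = x

/-- Feynman checkers with mass `m` and lattice step `ε`: the value `a(εx, εt, m, ε)`,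
where `x t : ℤ` are the coordinates in units of `ε`. -/
def am (x t : ℤ) (m ε : ℝ) : ℂ :=
  (1 + m ^ 2 * ε ^ 2 : ℂ) ^ ((1 - (t : ℂ)) / 2) * Complex.I *
    ∑ d ∈ pathsTo x t.toNat, (-Complex.I * (m * ε)) ^ turns d

/-- The basic model: `a(x,t)`. -/
def a (x t : ℤ) : ℂ :=
  (2 : ℂ) ^ ((1 - (t : ℂ)) / 2) * Complex.I *
    ∑ d ∈ pathsTo x t.toNat, (-Complex.I) ^ turns d

lemma endpt_snoc {n : ℕ} (d : Fin n → Bool) (b : Bool) :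
    endpt (Fin.snoc d b) = endpt d + (if b then 1 else -1) := by
  unfold endpt
  rw [Fin.sum_univ_castSucc]
  simp [Fin.snoc_castSucc, Fin.snoc_last]

lemma snoc_mk_lt {n : ℕ} (d : Fin n → Bool) (b : Bool) {i : ℕ} (h : i < n) (h' : i < n + 1) :
    (Fin.snoc d b : Fin (n+1) → Bool) ⟨i, h'⟩ = d ⟨i, h⟩ := by
  have : (⟨i, h'⟩ : Fin (n+1)) = Fin.castSucc ⟨i, h⟩ := rfl
  rw [this, Fin.snoc_castSucc]

lemma turns_snoc {n : ℕ} (hn : 0 < n) (d : Fin n → Bool) (b : Bool) :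
    turns (Fin.snoc d b) =
      turns d + (if d ⟨n - 1, by omega⟩ = b then 0 else 1) := by
  unfold turns
  have key : ((Finset.range (n+1)).filter fun i =>
      ∃ h : i + 1 < n + 1, (Fin.snoc d b : Fin (n+1) → Bool) ⟨i, Nat.lt_of_succ_lt h⟩ ≠ (Fin.snoc d b : Fin (n+1) → Bool) ⟨i + 1, h⟩) =
      ((Finset.range n).filter fun i =>
        ∃ h : i + 1 < n, d ⟨i, Nat.lt_of_succ_lt h⟩ ≠ d ⟨i + 1, h⟩) ∪
      (if d ⟨n - 1, by omega⟩ = b then ∅ else {n - 1}) := by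
    ext i
    simp only [Finset.mem_filter, Finset.mem_range, Finset.mem_union]
    constructor
    · rintro ⟨hi, h, hne⟩
      by_cases hlt : i + 1 < n
      · left
        refine ⟨by omega, ⟨hlt, ?_⟩⟩
        rwa [snoc_mk_lt d b (by omega), snoc_mk_lt d b hlt] at hne
      · -- i + 1 = n, so i = n - 1
        have hi1 : i = n - 1 := by omega
        rw [snoc_mk_lt d b (by omega)] at hne
        have : (⟨i+1, h⟩ : Fin (n+1)) = Fin.last n := by
          ext; simp; omega
        rw [this, Fin.snoc_last] at hne
        right
        have hdb : d ⟨i, by omega⟩ ≠ b := hne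
        have : d ⟨n-1, by omega⟩ ≠ b := by
          convert hdb using 3 <;> omega
        simp [this, hi1]
    · rintro (⟨hi, h, hne⟩ | hmem)
      · refine ⟨by omega, by omega, ?_⟩
        rw [snoc_mk_lt d b (by omega), snoc_mk_lt d b h]
        exact hne
      · split at hmem
        · simp at hmem
        · next hne =>
          simp at hmem
          subst hmem
          refine ⟨by omega, by omega, ?_⟩
          rw [snoc_mk_lt d b (by omega)]
          have : (⟨n-1+1, by omega⟩ : Fin (n+1)) = Fin.last n := by ext; simp; omega
          rw [this, Fin.snoc_last]
          convert hne using 3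
  rw [key, Finset.card_union_of_disjoint]
  · congr 1
    split <;> simp
  · split
    · simp
    · simp only [Finset.disjoint_singleton_right, Finset.mem_filter, Finset.mem_range]
      rintro ⟨-, h, -⟩
      omega

lemma turns_one (d : Fin 1 → Bool) : turns d = 0 := by
  unfold turns
  convert Finset.card_empty
  rw [Finset.filter_eq_empty_iff]
  rintro i - ⟨h, -⟩
  omega

lemma parity_turns : ∀ (n : ℕ) (hn : 0 < n) (d : Fin n → Bool),
    (d ⟨n - 1, by omega⟩ = d ⟨0, hn⟩) ↔ Even (turns d) := by
  intro n
  induction n with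
  | zero => omega
  | succ n ih =>
    intro hn d
    rcases Nat.eq_zero_or_pos n with rfl | hn'
    · simp [turns_one d]
    · have hd : (Fin.snoc (Fin.init d) (d (Fin.last n)) : Fin (n+1) → Bool) = d :=
        Fin.snoc_init_self d
      have ht := turns_snoc hn' (Fin.init d) (d (Fin.last n))
      rw [hd] at ht
      have h0 : Fin.init d ⟨0, hn'⟩ = d ⟨0, hn⟩ := rfl
      have hlast : d ⟨n + 1 - 1, by omega⟩ = d (Fin.last n) := by congr 1
      have ihd := ih hn' (Fin.init d)
      rw [h0] at ihd
      rw [hlast]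
      by_cases hc : Fin.init d ⟨n - 1, by omega⟩ = d (Fin.last n)
      · rw [if_pos hc, add_zero] at ht
        rw [ht, ← ihd]
        have key : ∀ (b1 b2 b3 : Bool), b1 = b2 → ((b2 = b3) ↔ (b1 = b3)) := by decide
        exact key _ _ _ hc
      · rw [if_neg hc] at ht
        rw [ht, Nat.even_add_one, ← ihd]
        have key : ∀ (b1 b2 b3 : Bool), ¬(b1 = b2) → ((b2 = b3) ↔ ¬(b1 = b3)) := by decide
        exact key _ _ _ hc

lemma snoc_mem_pathsTo {x : ℤ} {n : ℕ} (hn : 0 < n) (d : Fin n → Bool) (b : Bool) :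
    (Fin.snoc d b : Fin (n+1) → Bool) ∈ pathsTo x (n+1) ↔
      d ∈ pathsTo (x - (if b then 1 else -1)) n := by
  simp only [pathsTo, Finset.mem_filter, Finset.mem_univ, true_and]
  have h0 : (Fin.snoc d b : Fin (n+1) → Bool) ⟨0, Nat.succ_pos n⟩ = d ⟨0, hn⟩ :=
    snoc_mk_lt d b hn _
  rw [endpt_snoc]
  constructor
  · rintro ⟨⟨h, h1⟩, h2⟩
    refine ⟨⟨hn, ?_⟩, by omega⟩
    rw [← h0]; exact h1
  · rintro ⟨⟨h, h1⟩, h2⟩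
    refine ⟨⟨Nat.succ_pos n, ?_⟩, by omega⟩
    rw [h0]; exact h1

lemma sum_pathsTo_part {M : Type*} [AddCommMonoid M] (x : ℤ) (n : ℕ) (hn : 0 < n) (b : Bool)
    (f : (Fin (n+1) → Bool) → M) :
    ∑ d ∈ (pathsTo x (n+1)).filter (fun d => d (Fin.last n) = b), f d =
      ∑ d ∈ pathsTo (x - (if b then 1 else -1)) n, f (Fin.snoc d b) := by
  refine Finset.sum_nbij' (fun d => Fin.init d) (fun d => Fin.snoc d b) ?_ ?_ ?_ ?_ ?_
  · intro d hd
    rw [Finset.mem_filter] at hd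
    obtain ⟨hd1, hd2⟩ := hd
    rw [← snoc_mem_pathsTo hn]
    have : (Fin.snoc (Fin.init d) b : Fin (n+1) → Bool) = d := by
      rw [← hd2]; exact Fin.snoc_init_self d
    rw [this]; exact hd1
  · intro d hd
    rw [Finset.mem_filter]
    refine ⟨(snoc_mem_pathsTo hn d b).2 hd, ?_⟩
    exact Fin.snoc_last _ _
  · intro d hd
    rw [Finset.mem_filter] at hd
    rw [← hd.2]; exact Fin.snoc_init_self d
  · intro d hd
    exact Fin.init_snoc _ _
  · intro d hd
    rw [Finset.mem_filter] at hd
    rw [← hd.2]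
    exact congrArg f (Fin.snoc_init_self d).symm

lemma sum_pathsTo_succ {M : Type*} [AddCommMonoid M] (x : ℤ) (n : ℕ) (hn : 0 < n)
    (f : (Fin (n+1) → Bool) → M) :
    ∑ d ∈ pathsTo x (n+1), f d =
      ∑ d ∈ pathsTo (x-1) n, f (Fin.snoc d true) +
      ∑ d ∈ pathsTo (x+1) n, f (Fin.snoc d false) := by
  rw [← Finset.sum_filter_add_sum_filter_not (pathsTo x (n+1)) (fun d => d (Fin.last n) = true) f]
  congr 1
  · have := sum_pathsTo_part x n hn true f
    simpa using this
  · have := sum_pathsTo_part x n hn false f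
    simp only [if_neg (by decide : ¬(false = true)), sub_neg_eq_add] at this
    rw [← this]
    apply Finset.sum_congr _ (fun _ _ => rfl)
    ext d
    simp [Bool.not_eq_true]

lemma z_sq (r : ℝ) : (-Complex.I * r) ^ 2 = ((-(r^2) : ℝ) : ℂ) := by
  push_cast
  rw [mul_pow]
  simp [Complex.I_sq]

lemma z_pow_even (r : ℝ) (j : ℕ) :
    (-Complex.I * r) ^ (2 * j) = (((-(r^2))^j : ℝ) : ℂ) := by
  rw [pow_mul, z_sq, ← Complex.ofReal_pow]

lemma z_pow_re_odd (r : ℝ) {k : ℕ} (hk : Odd k) : ((-Complex.I * r) ^ k).re = 0 := by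
  obtain ⟨j, rfl⟩ := hk
  rw [pow_succ, z_pow_even, Complex.mul_re, Complex.ofReal_re, Complex.ofReal_im,
    zero_mul, sub_zero]
  have : (-Complex.I * r).re = 0 := by simp
  rw [this, mul_zero]

lemma z_pow_im_even (r : ℝ) {k : ℕ} (hk : Even k) : ((-Complex.I * r) ^ k).im = 0 := by
  obtain ⟨j, rfl⟩ := hk
  rw [show j + j = 2 * j by ring, z_pow_even, Complex.ofReal_im]

lemma mem_pathsTo_first {x : ℤ} {n : ℕ} (hn : 0 < n) {d : Fin n → Bool}
    (hd : d ∈ pathsTo x n) : d ⟨0, hn⟩ = true := by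
  simp only [pathsTo, Finset.mem_filter, Finset.mem_univ, true_and] at hd
  obtain ⟨⟨h, h1⟩, -⟩ := hd
  exact h1

lemma parity_of_mem {x : ℤ} {n : ℕ} (hn : 0 < n) {d : Fin n → Bool}
    (hd : d ∈ pathsTo x n) : (d ⟨n - 1, by omega⟩ = true) ↔ Even (turns d) := by
  have h := parity_turns n hn d
  rw [mem_pathsTo_first hn hd] at h
  exact h

lemma term_true {x : ℤ} {n : ℕ} (hn : 0 < n) (r : ℝ) {d : Fin n → Bool}
    (hd : d ∈ pathsTo x n) :
    ((-Complex.I * r) ^ turns (Fin.snoc d true)).re =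
      ((1 + -Complex.I * r) * (-Complex.I * r) ^ turns d).re := by
  rw [turns_snoc hn d true, add_mul, one_mul, Complex.add_re, ← pow_succ']
  by_cases hl : d ⟨n - 1, by omega⟩ = true
  · rw [if_pos hl, add_zero]
    have heven : Even (turns d) := (parity_of_mem hn hd).1 hl
    rw [z_pow_re_odd r heven.add_one, add_zero]
  · rw [if_neg hl]
    have hodd : Odd (turns d) := by
      rw [Nat.odd_iff, ← Nat.not_even_iff]
      exact fun h => hl ((parity_of_mem hn hd).2 h)
    rw [z_pow_re_odd r hodd, zero_add]

lemma term_false_re {x : ℤ} {n : ℕ} (hn : 0 < n) (r : ℝ) {d : Fin n → Bool}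
    (hd : d ∈ pathsTo x n) :
    ((-Complex.I * r) ^ turns (Fin.snoc d false)).re = 0 := by
  rw [turns_snoc hn d false]
  by_cases hl : d ⟨n - 1, by omega⟩ = true
  · have : ¬ (d ⟨n - 1, by omega⟩ = false) := by simp [hl]
    rw [if_neg this]
    have heven : Even (turns d) := (parity_of_mem hn hd).1 hl
    exact z_pow_re_odd r heven.add_one
  · have : d ⟨n - 1, by omega⟩ = false := by simp at hl; exact hl
    rw [if_pos this, add_zero]
    have hodd : Odd (turns d) := by
      rw [Nat.odd_iff, ← Nat.not_even_iff]
      exact fun h => hl ((parity_of_mem hn hd).2 h)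
    exact z_pow_re_odd r hodd

lemma term_false {x : ℤ} {n : ℕ} (hn : 0 < n) (r : ℝ) {d : Fin n → Bool}
    (hd : d ∈ pathsTo x n) :
    ((-Complex.I * r) ^ turns (Fin.snoc d false)).im =
      ((1 + -Complex.I * r) * (-Complex.I * r) ^ turns d).im := by
  rw [turns_snoc hn d false, add_mul, one_mul, Complex.add_im, ← pow_succ']
  by_cases hl : d ⟨n - 1, by omega⟩ = true
  · have hne : ¬ (d ⟨n - 1, by omega⟩ = false) := by simp [hl]
    rw [if_neg hne]
    have heven : Even (turns d) := (parity_of_mem hn hd).1 hl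
    rw [z_pow_im_even r heven, zero_add]
  · have heq : d ⟨n - 1, by omega⟩ = false := by simp at hl; exact hl
    rw [if_pos heq, add_zero]
    have hodd : Odd (turns d) := by
      rw [Nat.odd_iff, ← Nat.not_even_iff]
      exact fun h => hl ((parity_of_mem hn hd).2 h)
    have : Even (turns d + 1) := hodd.add_one
    rw [z_pow_im_even r this, add_zero]

lemma term_true_im {x : ℤ} {n : ℕ} (hn : 0 < n) (r : ℝ) {d : Fin n → Bool}
    (hd : d ∈ pathsTo x n) :
    ((-Complex.I * r) ^ turns (Fin.snoc d true)).im = 0 := by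
  rw [turns_snoc hn d true]
  by_cases hl : d ⟨n - 1, by omega⟩ = true
  · rw [if_pos hl, add_zero]
    exact z_pow_im_even r ((parity_of_mem hn hd).1 hl)
  · rw [if_neg hl]
    have hodd : Odd (turns d) := by
      rw [Nat.odd_iff, ← Nat.not_even_iff]
      exact fun h => hl ((parity_of_mem hn hd).2 h)
    exact z_pow_im_even r hodd.add_one

lemma key_re (r : ℝ) (x : ℤ) (n : ℕ) (hn : 0 < n) :
    (∑ d ∈ pathsTo x (n+1), (-Complex.I * r) ^ turns d).re =
      ((1 + -Complex.I * r) * ∑ d ∈ pathsTo (x-1) n, (-Complex.I * r) ^ turns d).re := by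
  rw [sum_pathsTo_succ x n hn (fun d => (-Complex.I * r) ^ turns d), Finset.mul_sum,
    Complex.add_re, Complex.re_sum, Complex.re_sum, Complex.re_sum]
  rw [Finset.sum_congr rfl (fun d hd => term_true hn r hd),
    Finset.sum_eq_zero (fun d hd => term_false_re hn r hd), add_zero]

lemma key_im (r : ℝ) (x : ℤ) (n : ℕ) (hn : 0 < n) :
    (∑ d ∈ pathsTo x (n+1), (-Complex.I * r) ^ turns d).im =
      ((1 + -Complex.I * r) * ∑ d ∈ pathsTo (x+1) n, (-Complex.I * r) ^ turns d).im := by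
  rw [sum_pathsTo_succ x n hn (fun d => (-Complex.I * r) ^ turns d), Finset.mul_sum,
    Complex.add_im, Complex.im_sum, Complex.im_sum, Complex.im_sum]
  rw [Finset.sum_eq_zero (fun d hd => term_true_im hn r hd),
    Finset.sum_congr rfl (fun d hd => term_false hn r hd), zero_add]

lemma expand_re (r : ℝ) (S : ℂ) : ((1 + -Complex.I * r) * S).re = S.re + r * S.im := by
  simp [Complex.mul_re, Complex.add_re, Complex.add_im]

lemma expand_im (r : ℝ) (S : ℂ) : ((1 + -Complex.I * r) * S).im = S.im - r * S.re := by
  simp [Complex.mul_im, Complex.add_re, Complex.add_im]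
  ring

/-- Dirac equation for Feynman checkers with mass m and lattice step ε. -/
theorem dirac_equation_mass (m ε : ℝ) (hε : 0 < ε) (hm : 0 ≤ m) (x t : ℤ) (ht : 0 < t) :
    (am x (t + 1) m ε).re = (1 / Real.sqrt (1 + m ^ 2 * ε ^ 2)) *
      ((am (x + 1) t m ε).re + m * ε * (am (x + 1) t m ε).im) ∧
    (am x (t + 1) m ε).im = (1 / Real.sqrt (1 + m ^ 2 * ε ^ 2)) *
      ((am (x - 1) t m ε).im - m * ε * (am (x - 1) t m ε).re) := by
  set C : ℝ := 1 + m ^ 2 * ε ^ 2 with hCdef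
  have hC : 0 < C := by positivity
  have hsq : (0:ℝ) < Real.sqrt C := Real.sqrt_pos.2 hC
  set r : ℝ := m * ε with hr
  set n := t.toNat with hndef
  have hn : 0 < n := by omega
  have ht1 : (t + 1).toNat = n + 1 := by omega
  have htn : ((n : ℤ) : ℝ) = (t : ℝ) := by
    have : (n : ℤ) = t := Int.toNat_of_nonneg ht.le
    exact_mod_cast congrArg (fun z : ℤ => (z : ℝ)) this
  -- rewrite am in terms of real powers
  have hbase : (1 + (m:ℂ) ^ 2 * (ε:ℂ) ^ 2) = ((C : ℝ) : ℂ) := by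
    push_cast [hCdef]; ring
  have hz : -Complex.I * ((m:ℂ) * (ε:ℂ)) = -Complex.I * ((r : ℝ) : ℂ) := by
    push_cast [hr]; ring
  have ham : ∀ y s : ℤ, am y s m ε =
      ((C ^ ((1 - (s:ℝ)) / 2) : ℝ) : ℂ) * Complex.I *
        ∑ d ∈ pathsTo y s.toNat, (-Complex.I * ((r:ℝ):ℂ)) ^ turns d := by
    intro y s
    unfold am
    rw [hz, hbase]
    congr 2
    rw [Complex.ofReal_cpow hC.le]
    congr 1
    push_cast
    ring
  have hre : ∀ (p : ℝ) (S : ℂ), ((p : ℂ) * Complex.I * S).re = -(p * S.im) := by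
    intro p S; simp [Complex.mul_re, Complex.mul_im]
  have him : ∀ (p : ℝ) (S : ℂ), ((p : ℂ) * Complex.I * S).im = p * S.re := by
    intro p S; simp [Complex.mul_re, Complex.mul_im]
  -- the power relation
  have hP : C ^ ((1 - (((t+1):ℤ):ℝ)) / 2) = C ^ ((1 - (t:ℝ)) / 2) / Real.sqrt C := by
    push_cast
    rw [show (1 - ((t:ℝ) + 1)) / 2 = (1 - (t:ℝ)) / 2 - 1 / 2 by ring,
      Real.rpow_sub hC, Real.sqrt_eq_rpow]
  have hkre := key_re r x n hn
  have hkim := key_im r x n hn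
  rw [expand_re] at hkre
  rw [expand_im] at hkim
  set Sx := ∑ d ∈ pathsTo x (n+1), (-Complex.I * ((r:ℝ):ℂ)) ^ turns d with hSx
  set Sp := ∑ d ∈ pathsTo (x+1) n, (-Complex.I * ((r:ℝ):ℂ)) ^ turns d with hSp
  set Sm := ∑ d ∈ pathsTo (x-1) n, (-Complex.I * ((r:ℝ):ℂ)) ^ turns d with hSm
  have e1 : am x (t+1) m ε = ((C ^ ((1 - (((t+1):ℤ):ℝ)) / 2) : ℝ) : ℂ) * Complex.I * Sx := by
    rw [ham x (t+1), ht1]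
  have e2 : am (x+1) t m ε = ((C ^ ((1 - (t:ℝ)) / 2) : ℝ) : ℂ) * Complex.I * Sp := by
    rw [ham (x+1) t]
  have e3 : am (x-1) t m ε = ((C ^ ((1 - (t:ℝ)) / 2) : ℝ) : ℂ) * Complex.I * Sm := by
    rw [ham (x-1) t]
  rw [e1, e2, e3, hre, hre, him, him, hre, him, hP]
  constructor
  · rw [hkim]
    field_simp
    ring
  · rw [hkre]
    field_simp
    ring
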